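/- Let Ω be a finite set with |Ω| ≥ 3 and let Π be a nontrivial partition of Ω, i.e. there exists E* ∈ Π with 1 < |E*| < |Ω|. Then a distorted belief φ : Δ(Ω) → Δ(Ω) satisfies positivity, continuity, coherency and Π-marginality if and only if φ is power-weighted with parameters ψ and α where α = 1 and ψ is Π-measurable (i.e. ψ is constant on each cell of Π). -/

import Mathlib

open Finset

/-- `p` is a probability distribution on the finite set `Ω`. -/
def IsDist {Ω : Type*} [Fintype Ω] (p : Ω → ℝ) : Prop :=
  (∀ ω, 0 ≤ p ω) ∧ ∑ ω, p ω = 1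

/-- The conditional distribution `p(·|E)` of `p` given the event `E`. -/
noncomputable def condOn {Ω : Type*} [Fintype Ω] [DecidableEq Ω]
    (p : Ω → ℝ) (E : Finset Ω) : Ω → ℝ :=
  fun ω => if ω ∈ E then p ω / ∑ ω' ∈ E, p ω' else 0

/-- A distorted belief is positive if `φ(p)(E) = 0` iff `p(E) = 0`. -/
def PositiveBelief {Ω : Type*} [Fintype Ω] (φ : (Ω → ℝ) → Ω → ℝ) : Prop :=
  ∀ p, IsDist p → ∀ E : Finset Ω, (∑ ω ∈ E, φ p ω = 0 ↔ ∑ ω ∈ E, p ω = 0)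

/-- A distorted belief is coherent if distortion commutes with conditioning. -/
def CoherentBelief {Ω : Type*} [Fintype Ω] [DecidableEq Ω] (φ : (Ω → ℝ) → Ω → ℝ) : Prop :=
  ∀ p, IsDist p → ∀ E : Finset Ω, 0 < ∑ ω ∈ E, p ω →
    φ (condOn p E) = condOn (φ p) E

/-- `φ` is a power-weighted distorted belief with weights `ψ` and power `α`. -/
def IsPowerWeighted {Ω : Type*} [Fintype Ω] (φ : (Ω → ℝ) → Ω → ℝ)
    (ψ : Ω → ℝ) (α : ℝ) : Prop :=
  (∀ ω, 0 < ψ ω) ∧ 0 < α ∧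
    ∀ p, IsDist p → ∀ ω, φ p ω = ψ ω * p ω ^ α / ∑ ω', ψ ω' * p ω' ^ α

/-- `φ` is `Π`-marginal: if `p` and `p'` assign the same probability to every cell of
the partition `Π`, then so do `φ(p)` and `φ(p')`. -/
def PiMarginal {Ω : Type*} [Fintype Ω] [DecidableEq Ω]
    (P : Finpartition (Finset.univ : Finset Ω)) (φ : (Ω → ℝ) → Ω → ℝ) : Prop :=
  ∀ p p' : Ω → ℝ, IsDist p → IsDist p' →
    (∀ E ∈ P.parts, ∑ ω ∈ E, p ω = ∑ ω ∈ E, p' ω) →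
    ∀ E ∈ P.parts, ∑ ω ∈ E, φ p ω = ∑ ω ∈ E, φ p' ω

set_option linter.unusedSectionVars false
set_option linter.unusedVariables false

section Aux

/-- A positive additive function on the positive reals is linear. -/
lemma cauchy_pos_linear (f : ℝ → ℝ)
    (hadd : ∀ u v : ℝ, 0 < u → 0 < v → f (u + v) = f u + f v)
    (hpos : ∀ u : ℝ, 0 < u → 0 < f u) :
    ∀ u : ℝ, 0 < u → f u = f 1 * u := by
  have hmono : ∀ u v : ℝ, 0 < u → u < v → f u < f v := by
    intro u v hu huv
    have h := hadd u (v - u) hu (by linarith)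
    have h2 := hpos (v - u) (by linarith)
    have hv : u + (v - u) = v := by ring
    rw [hv] at h
    linarith
  have hnat : ∀ n : ℕ, ∀ u : ℝ, 0 < u → f (((n : ℝ) + 1) * u) = ((n : ℝ) + 1) * f u := by
    intro n
    induction n with
    | zero => intro u hu; simp
    | succ k ih =>
      intro u hu
      have h1 : ((k : ℝ) + 1) * u + u = (((k : ℕ) + 1 : ℕ) : ℝ) * u + u := by push_cast; ring
      have h2 := hadd (((k : ℝ) + 1) * u) u (by positivity) hu
      have h3 : (((k + 1 : ℕ) : ℝ) + 1) * u = ((k : ℝ) + 1) * u + u := by push_cast; ring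
      rw [h3, h2, ih u hu]
      push_cast
      ring
  have hnat' : ∀ n : ℕ, 0 < n → ∀ u : ℝ, 0 < u → f ((n : ℝ) * u) = (n : ℝ) * f u := by
    intro n hn u hu
    obtain ⟨k, rfl⟩ : ∃ k, n = k + 1 := ⟨n - 1, by omega⟩
    have := hnat k u hu
    push_cast
    convert this using 3
  have hrat : ∀ q : ℚ, 0 < q → f (q : ℝ) = (q : ℝ) * f 1 := by
    intro q hq
    have hnum : 0 < q.num := Rat.num_pos.mpr hq
    have hden : 0 < q.den := q.pos
    have hq' : (0 : ℝ) < (q : ℝ) := by exact_mod_cast hq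
    have hdne : (q.den : ℝ) ≠ 0 := by positivity
    have h1 : f ((q.den : ℝ) * (q : ℝ)) = (q.den : ℝ) * f (q : ℝ) := hnat' q.den hden _ hq'
    have h2 : (q.den : ℝ) * (q : ℝ) = (q.num : ℝ) := by
      rw [Rat.cast_def]
      field_simp
    have h3 : f ((q.num : ℝ)) = (q.num : ℝ) * f 1 := by
      have hnn : (q.num : ℝ) = ((q.num.toNat : ℕ) : ℝ) := by
        exact_mod_cast (Int.toNat_of_nonneg hnum.le).symm
      rw [hnn]
      have := hnat' q.num.toNat (by omega) 1 one_pos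
      rw [mul_one] at this
      exact this
    rw [h2, h3] at h1
    have h4 : (q.num : ℝ) = (q.den : ℝ) * (q : ℝ) := h2.symm
    rw [h4] at h1
    have h5 : (q.den : ℝ) * f (q : ℝ) = (q.den : ℝ) * ((q : ℝ) * f 1) := by
      linear_combination -h1
    exact mul_left_cancel₀ hdne h5
  intro u hu
  have hf1 : 0 < f 1 := hpos 1 one_pos
  have hle1 : f u ≤ f 1 * u := by
    by_contra h
    push_neg at h
    have hlt : u < f u / f 1 := by rw [lt_div_iff₀ hf1]; linarith
    obtain ⟨q, hq1, hq2⟩ := exists_rat_btwn hlt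
    have hqpos : (0 : ℝ) < (q : ℝ) := hu.trans hq1
    have hqpos' : (0 : ℚ) < q := by exact_mod_cast hqpos
    have hm := hmono u (q : ℝ) hu hq1
    rw [hrat q hqpos'] at hm
    have h6 : (q : ℝ) * f 1 < f u := by
      rw [lt_div_iff₀ hf1] at hq2
      linarith
    linarith
  have hle2 : f 1 * u ≤ f u := by
    by_contra h
    push_neg at h
    have hfu : 0 < f u / f 1 := div_pos (hpos u hu) hf1
    have hlt : f u / f 1 < u := by rw [div_lt_iff₀ hf1]; linarith
    obtain ⟨q, hq1, hq2⟩ := exists_rat_btwn hlt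
    have hqpos : (0 : ℝ) < (q : ℝ) := hfu.trans hq1
    have hqpos' : (0 : ℚ) < q := by exact_mod_cast hqpos
    have hm := hmono (q : ℝ) u hqpos hq2
    rw [hrat q hqpos'] at hm
    have h6 : f u < (q : ℝ) * f 1 := by
      rw [div_lt_iff₀ hf1] at hq1
      linarith
    linarith
  linarith

end Aux
section Machinery

variable {Ω : Type*} [Fintype Ω] [DecidableEq Ω] {φ : (Ω → ℝ) → Ω → ℝ}

lemma phi_eq_zero_iff (hpos : PositiveBelief φ) {p : Ω → ℝ} (hp : IsDist p) (ω : Ω) :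
    φ p ω = 0 ↔ p ω = 0 := by
  have h := hpos p hp {ω}
  simpa using h

lemma phi_pt_pos (hmap : ∀ p, IsDist p → IsDist (φ p)) (hpos : PositiveBelief φ)
    {p : Ω → ℝ} (hp : IsDist p) {ω : Ω} (h : 0 < p ω) : 0 < φ p ω := by
  rcases ((hmap p hp).1 ω).lt_or_eq with h' | h'
  · exact h'
  · exact absurd ((phi_eq_zero_iff hpos hp ω).mp h'.symm) h.ne'

lemma sumE_phi_pos (hmap : ∀ p, IsDist p → IsDist (φ p)) (hpos : PositiveBelief φ)
    {p : Ω → ℝ} (hp : IsDist p) {E : Finset Ω} (hE : 0 < ∑ x ∈ E, p x) :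
    0 < ∑ x ∈ E, φ p x := by
  rcases (Finset.sum_nonneg fun x _ => (hmap p hp).1 x).lt_or_eq with h' | h'
  · exact h'
  · exact absurd ((hpos p hp E).mp h'.symm) hE.ne'

/-- Two point distribution: mass `t` at `ω` and `1 - t` at `ω'`. -/
noncomputable def duo (ω ω' : Ω) (t : ℝ) : Ω → ℝ :=
  fun x => (if x = ω then t else 0) + (if x = ω' then 1 - t else 0)

lemma duo_isDist {ω ω' : Ω} (hne : ω ≠ ω') {t : ℝ} (h0 : 0 ≤ t) (h1 : t ≤ 1) :
    IsDist (duo ω ω' t) := by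
  constructor
  · intro x
    unfold duo
    split_ifs <;> linarith
  · simp [duo, Finset.sum_add_distrib]

lemma duo_fst {ω ω' : Ω} (hne : ω ≠ ω') (t : ℝ) : duo ω ω' t ω = t := by
  simp [duo, hne]

lemma duo_snd {ω ω' : Ω} (hne : ω ≠ ω') (t : ℝ) : duo ω ω' t ω' = 1 - t := by
  simp [duo, hne.symm]

/-- The ratio function: relative weight `φ` assigns to `ω` versus `ω'` when
`p ω / p ω' = t`. -/
noncomputable def rat (φ : (Ω → ℝ) → Ω → ℝ) (ω ω' : Ω) (t : ℝ) : ℝ :=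
  φ (duo ω ω' (t / (1 + t))) ω / φ (duo ω ω' (t / (1 + t))) ω'

lemma rat_spec (hmap : ∀ p, IsDist p → IsDist (φ p)) (hpos : PositiveBelief φ)
    (hcoh : CoherentBelief φ) {ω ω' : Ω} (hne : ω ≠ ω') {p : Ω → ℝ} (hp : IsDist p)
    (h1 : 0 < p ω) (h2 : 0 < p ω') :
    φ p ω = rat φ ω ω' (p ω / p ω') * φ p ω' := by
  set E : Finset Ω := {ω, ω'} with hEdef
  have hωE : ω ∈ E := by simp [hEdef]
  have hω'E : ω' ∈ E := by simp [hEdef]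
  have hsum : ∑ x ∈ E, p x = p ω + p ω' := Finset.sum_pair hne
  have hS : 0 < ∑ x ∈ E, p x := by rw [hsum]; linarith
  have hSne : p ω + p ω' ≠ 0 := by linarith
  have ht : (p ω / p ω') / (1 + p ω / p ω') = p ω / (p ω + p ω') := by
    rw [div_div]
    congr 1
    field_simp
    ring
  have hcond : condOn p E = duo ω ω' ((p ω / p ω') / (1 + p ω / p ω')) := by
    funext x
    rw [ht]
    simp only [condOn, duo, hsum]
    by_cases hx : x = ω
    · subst hx
      simp [hωE, hne]
    · by_cases hx' : x = ω'
      · subst hx'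
        simp only [hω'E, if_true, if_neg hx, zero_add, if_pos rfl]
        field_simp
        ring
      · simp [hx, hx', hEdef]
  have hkey := hcoh p hp E hS
  have hφE : 0 < ∑ x ∈ E, φ p x := sumE_phi_pos hmap hpos hp hS
  have hφω' : 0 < φ p ω' := phi_pt_pos hmap hpos hp h2
  have e1 : φ (duo ω ω' ((p ω / p ω') / (1 + p ω / p ω'))) ω = φ p ω / ∑ x ∈ E, φ p x := by
    rw [← hcond, hkey]
    simp [condOn, hωE]
  have e2 : φ (duo ω ω' ((p ω / p ω') / (1 + p ω / p ω'))) ω' = φ p ω' / ∑ x ∈ E, φ p x := by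
    rw [← hcond, hkey]
    simp [condOn, hω'E]
  unfold rat
  rw [e1, e2]
  field_simp

lemma rat_pos (hmap : ∀ p, IsDist p → IsDist (φ p)) (hpos : PositiveBelief φ)
    {ω ω' : Ω} (hne : ω ≠ ω') {t : ℝ} (ht : 0 < t) : 0 < rat φ ω ω' t := by
  have h1 : 0 < t / (1 + t) := by positivity
  have h2 : t / (1 + t) < 1 := by
    rw [div_lt_one (by linarith)]
    linarith
  have hd := duo_isDist hne h1.le h2.le
  have hfst : 0 < duo ω ω' (t / (1 + t)) ω := by rw [duo_fst hne]; exact h1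
  have hsnd : 0 < duo ω ω' (t / (1 + t)) ω' := by rw [duo_snd hne]; linarith
  exact div_pos (phi_pt_pos hmap hpos hd hfst) (phi_pt_pos hmap hpos hd hsnd)

/-- Three point distribution. -/
noncomputable def trio (ω₁ ω₂ ω₃ : Ω) (a b c : ℝ) : Ω → ℝ :=
  fun x => (if x = ω₁ then a else 0) + (if x = ω₂ then b else 0) + (if x = ω₃ then c else 0)

lemma trio_isDist {ω₁ ω₂ ω₃ : Ω} (h12 : ω₁ ≠ ω₂) (h13 : ω₁ ≠ ω₃) (h23 : ω₂ ≠ ω₃)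
    {a b c : ℝ} (ha : 0 ≤ a) (hb : 0 ≤ b) (hc : 0 ≤ c) (habc : a + b + c = 1) :
    IsDist (trio ω₁ ω₂ ω₃ a b c) := by
  constructor
  · intro x
    unfold trio
    split_ifs <;> linarith
  · simp [trio, Finset.sum_add_distrib, habc]

lemma trio_app₁ {ω₁ ω₂ ω₃ : Ω} (h12 : ω₁ ≠ ω₂) (h13 : ω₁ ≠ ω₃) (a b c : ℝ) :
    trio ω₁ ω₂ ω₃ a b c ω₁ = a := by simp [trio, h12, h13]

lemma trio_app₂ {ω₁ ω₂ ω₃ : Ω} (h12 : ω₁ ≠ ω₂) (h23 : ω₂ ≠ ω₃) (a b c : ℝ) :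
    trio ω₁ ω₂ ω₃ a b c ω₂ = b := by simp [trio, h12.symm, h23]

lemma trio_app₃ {ω₁ ω₂ ω₃ : Ω} (h13 : ω₁ ≠ ω₃) (h23 : ω₂ ≠ ω₃) (a b c : ℝ) :
    trio ω₁ ω₂ ω₃ a b c ω₃ = c := by simp [trio, h13.symm, h23.symm]

lemma trio_app_other {ω₁ ω₂ ω₃ x : Ω} (hx1 : x ≠ ω₁) (hx2 : x ≠ ω₂) (hx3 : x ≠ ω₃)
    (a b c : ℝ) : trio ω₁ ω₂ ω₃ a b c x = 0 := by simp [trio, hx1, hx2, hx3]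

lemma trio_sum (ω₁ ω₂ ω₃ : Ω) (a b c : ℝ) (F : Finset Ω) :
    ∑ x ∈ F, trio ω₁ ω₂ ω₃ a b c x =
      (if ω₁ ∈ F then a else 0) + (if ω₂ ∈ F then b else 0) + (if ω₃ ∈ F then c else 0) := by
  simp [trio, Finset.sum_add_distrib]


lemma rat_mul (hmap : ∀ p, IsDist p → IsDist (φ p)) (hpos : PositiveBelief φ)
    (hcoh : CoherentBelief φ) {ω ω' ω'' : Ω} (h12 : ω ≠ ω') (h13 : ω ≠ ω'') (h23 : ω' ≠ ω'')
    {t s : ℝ} (ht : 0 < t) (hs : 0 < s) :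
    rat φ ω ω'' (t * s) = rat φ ω ω' t * rat φ ω' ω'' s := by
  set z : ℝ := (t * s + s + 1)⁻¹ with hzdef
  have hz : 0 < z := by positivity
  set p := trio ω ω' ω'' (t * s * z) (s * z) z with hpdef
  have hp : IsDist p :=
    trio_isDist h12 h13 h23 (by positivity) (by positivity) (by positivity)
      (by rw [hzdef]; field_simp)
  have hpω : p ω = t * s * z := trio_app₁ h12 h13 _ _ _
  have hpω' : p ω' = s * z := trio_app₂ h12 h23 _ _ _
  have hpω'' : p ω'' = z := trio_app₃ h13 h23 _ _ _
  have hπ1 : 0 < p ω := by rw [hpω]; positivity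
  have hπ2 : 0 < p ω' := by rw [hpω']; positivity
  have hπ3 : 0 < p ω'' := by rw [hpω'']; positivity
  have r1 : p ω / p ω'' = t * s := by rw [hpω, hpω'']; field_simp
  have r2 : p ω / p ω' = t := by rw [hpω, hpω']; field_simp
  have r3 : p ω' / p ω'' = s := by rw [hpω', hpω'']; field_simp
  have e1 := rat_spec hmap hpos hcoh h13 hp hπ1 hπ3
  have e2 := rat_spec hmap hpos hcoh h12 hp hπ1 hπ2
  have e3 := rat_spec hmap hpos hcoh h23 hp hπ2 hπ3
  rw [r1] at e1; rw [r2] at e2; rw [r3] at e3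
  have hφ3 : 0 < φ p ω'' := phi_pt_pos hmap hpos hp hπ3
  apply mul_right_cancel₀ hφ3.ne'
  rw [← e1, e2, e3]
  ring

lemma rat_inv_mul (hmap : ∀ p, IsDist p → IsDist (φ p)) (hpos : PositiveBelief φ)
    (hcoh : CoherentBelief φ) {ω ω' : Ω} (hne : ω ≠ ω') {t : ℝ} (ht : 0 < t) :
    rat φ ω ω' t * rat φ ω' ω t⁻¹ = 1 := by
  have h1 : 0 < t / (1 + t) := by positivity
  have h2 : t / (1 + t) < 1 := by
    rw [div_lt_one (by linarith)]; linarith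
  set p := duo ω ω' (t / (1 + t)) with hpdef
  have hp : IsDist p := duo_isDist hne h1.le h2.le
  have hpω : p ω = t / (1 + t) := duo_fst hne _
  have hpω' : p ω' = 1 - t / (1 + t) := duo_snd hne _
  have hπ1 : 0 < p ω := by rw [hpω]; exact h1
  have hπ2 : 0 < p ω' := by rw [hpω']; linarith
  have r1 : p ω / p ω' = t := by
    rw [hpω, hpω']
    have : (1 : ℝ) + t ≠ 0 := by linarith
    field_simp
    ring
  have r2 : p ω' / p ω = t⁻¹ := by
    rw [hpω, hpω']
    have : (1 : ℝ) + t ≠ 0 := by linarith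
    field_simp
    ring
  have e1 := rat_spec hmap hpos hcoh hne hp hπ1 hπ2
  have e2 := rat_spec hmap hpos hcoh hne.symm hp hπ2 hπ1
  rw [r1] at e1; rw [r2] at e2
  have hφ1 : 0 < φ p ω := phi_pt_pos hmap hpos hp hπ1
  apply mul_right_cancel₀ hφ1.ne'
  rw [one_mul]
  calc rat φ ω ω' t * rat φ ω' ω t⁻¹ * φ p ω
      = rat φ ω ω' t * (rat φ ω' ω t⁻¹ * φ p ω) := by ring
    _ = rat φ ω ω' t * φ p ω' := by rw [← e2]
    _ = φ p ω := e1.symm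

lemma marg_add {P : Finpartition (Finset.univ : Finset Ω)}
    (hmap : ∀ p, IsDist p → IsDist (φ p)) (hpos : PositiveBelief φ)
    (hcoh : CoherentBelief φ) (hmarg : PiMarginal P φ)
    {E : Finset Ω} (hE : E ∈ P.parts) {ω ω' ω₀ : Ω} (hω : ω ∈ E) (hω' : ω' ∈ E)
    (hne : ω ≠ ω') (hω₀ : ω₀ ∉ E) {u v : ℝ} (hu : 0 < u) (hv : 0 < v) :
    rat φ ω ω₀ (u + v) = rat φ ω ω₀ u + rat φ ω' ω₀ v := by
  have h10 : ω ≠ ω₀ := fun h => hω₀ (h ▸ hω)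
  have h20 : ω' ≠ ω₀ := fun h => hω₀ (h ▸ hω')
  set c : ℝ := (1 + u + v)⁻¹ with hcdef
  have hc : 0 < c := by positivity
  set a : ℝ := u * c with hadef
  set b : ℝ := v * c with hbdef
  have ha : 0 < a := by positivity
  have hb : 0 < b := by positivity
  have habc : a + b + c = 1 := by rw [hadef, hbdef, hcdef]; field_simp; ring
  set p := trio ω ω' ω₀ a b c with hpdef
  set p' := trio ω ω' ω₀ (a + b) 0 c with hp'def
  have hp : IsDist p := trio_isDist hne h10 h20 ha.le hb.le hc.le habc
  have hp' : IsDist p' := trio_isDist hne h10 h20 (by positivity) le_rfl hc.le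
    (by rw [add_zero]; exact habc)
  have hagree : ∀ F ∈ P.parts, ∑ x ∈ F, p x = ∑ x ∈ F, p' x := by
    intro F hF
    rw [hpdef, hp'def, trio_sum, trio_sum]
    have hiff : ω ∈ F ↔ ω' ∈ F := by
      constructor
      · intro h; exact (P.eq_of_mem_parts hF hE h hω) ▸ hω'
      · intro h; exact (P.eq_of_mem_parts hF hE h hω') ▸ hω
    by_cases h : ω ∈ F
    · have h' : ω' ∈ F := hiff.mp h
      simp only [h, h', if_true]
      ring
    · have h' : ω' ∉ F := fun hh => h (hiff.mpr hh)
      simp only [h, h', if_false]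
  have hmargE := hmarg p p' hp hp' hagree E hE
  -- values of p and p'
  have hpω : p ω = a := trio_app₁ hne h10 _ _ _
  have hpω' : p ω' = b := trio_app₂ hne h20 _ _ _
  have hpω₀ : p ω₀ = c := trio_app₃ h10 h20 _ _ _
  have hp'ω : p' ω = a + b := trio_app₁ hne h10 _ _ _
  have hp'ω' : p' ω' = 0 := trio_app₂ hne h20 _ _ _
  have hp'ω₀ : p' ω₀ = c := trio_app₃ h10 h20 _ _ _
  -- sums over E
  have hsumE : ∑ x ∈ E, φ p x = φ p ω + φ p ω' := by
    rw [← Finset.sum_pair hne]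
    apply (Finset.sum_subset _ _).symm
    · intro x hx
      rcases Finset.mem_insert.mp hx with h | h
      · exact h ▸ hω
      · exact (Finset.mem_singleton.mp h) ▸ hω'
    · intro x hxE hxn
      have hx1 : x ≠ ω := fun h => hxn (by simp [h])
      have hx2 : x ≠ ω' := fun h => hxn (by simp [h])
      have hx3 : x ≠ ω₀ := fun h => hω₀ (h ▸ hxE)
      have : p x = 0 := trio_app_other hx1 hx2 hx3 _ _ _
      exact (phi_eq_zero_iff hpos hp x).mpr this
  have hsumE' : ∑ x ∈ E, φ p' x = φ p' ω := by
    apply Finset.sum_eq_single_of_mem ω hω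
    intro x hxE hx1
    by_cases hx2 : x = ω'
    · subst hx2
      exact (phi_eq_zero_iff hpos hp' x).mpr hp'ω'
    · have hx3 : x ≠ ω₀ := fun h => hω₀ (h ▸ hxE)
      exact (phi_eq_zero_iff hpos hp' x).mpr (trio_app_other hx1 hx2 hx3 _ _ _)
  -- sums over complement of E
  have hsumC : ∑ x ∈ Eᶜ, φ p x = φ p ω₀ := by
    apply Finset.sum_eq_single_of_mem ω₀ (Finset.mem_compl.mpr hω₀)
    intro x hxC hx3
    have hxE : x ∉ E := Finset.mem_compl.mp hxC
    have hx1 : x ≠ ω := fun h => hxE (h ▸ hω)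
    have hx2 : x ≠ ω' := fun h => hxE (h ▸ hω')
    exact (phi_eq_zero_iff hpos hp x).mpr (trio_app_other hx1 hx2 hx3 _ _ _)
  have hsumC' : ∑ x ∈ Eᶜ, φ p' x = φ p' ω₀ := by
    apply Finset.sum_eq_single_of_mem ω₀ (Finset.mem_compl.mpr hω₀)
    intro x hxC hx3
    have hxE : x ∉ E := Finset.mem_compl.mp hxC
    have hx1 : x ≠ ω := fun h => hxE (h ▸ hω)
    have hx2 : x ≠ ω' := fun h => hxE (h ▸ hω')
    exact (phi_eq_zero_iff hpos hp' x).mpr (trio_app_other hx1 hx2 hx3 _ _ _)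
  have htot : ∑ x ∈ E, φ p x + ∑ x ∈ Eᶜ, φ p x = 1 := by
    rw [Finset.sum_add_sum_compl]
    exact (hmap p hp).2
  have htot' : ∑ x ∈ E, φ p' x + ∑ x ∈ Eᶜ, φ p' x = 1 := by
    rw [Finset.sum_add_sum_compl]
    exact (hmap p' hp').2
  have hω₀eq : φ p ω₀ = φ p' ω₀ := by
    rw [← hsumC, ← hsumC']
    linarith [htot, htot', hmargE]
  -- ratio specs
  have hπω : 0 < p ω := by rw [hpω]; exact ha
  have hπω' : 0 < p ω' := by rw [hpω']; exact hb
  have hπω₀ : 0 < p ω₀ := by rw [hpω₀]; exact hc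
  have hπ'ω : 0 < p' ω := by rw [hp'ω]; positivity
  have hπ'ω₀ : 0 < p' ω₀ := by rw [hp'ω₀]; exact hc
  have e1 := rat_spec hmap hpos hcoh h10 hp hπω hπω₀
  have e2 := rat_spec hmap hpos hcoh h20 hp hπω' hπω₀
  have e3 := rat_spec hmap hpos hcoh h10 hp' hπ'ω hπ'ω₀
  have r1 : p ω / p ω₀ = u := by rw [hpω, hpω₀, hadef]; field_simp
  have r2 : p ω' / p ω₀ = v := by rw [hpω', hpω₀, hbdef]; field_simp
  have r3 : p' ω / p' ω₀ = u + v := by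
    rw [hp'ω, hp'ω₀, hadef, hbdef]
    field_simp
  rw [r1] at e1; rw [r2] at e2; rw [r3] at e3
  have hφω₀ : 0 < φ p ω₀ := phi_pt_pos hmap hpos hp hπω₀
  apply mul_right_cancel₀ hφω₀.ne'
  have key : rat φ ω ω₀ (u + v) * φ p ω₀ = rat φ ω ω₀ u * φ p ω₀ + rat φ ω' ω₀ v * φ p ω₀ := by
    rw [← e1, ← e2, ← hsumE, hmargE, hsumE', e3, hω₀eq]
  rw [key]
  ring

end Machinery

section Forward

variable {Ω : Type*} [Fintype Ω] [DecidableEq Ω] {φ : (Ω → ℝ) → Ω → ℝ}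

lemma forward_formula {P : Finpartition (Finset.univ : Finset Ω)}
    (hNontrivial : ∃ E ∈ P.parts, 1 < E.card ∧ E.card < Fintype.card Ω)
    (hmap : ∀ p, IsDist p → IsDist (φ p)) (hpos : PositiveBelief φ)
    (hcoh : CoherentBelief φ) (hmarg : PiMarginal P φ) :
    ∃ ψ : Ω → ℝ, (∀ ω, 0 < ψ ω) ∧
      (∀ p, IsDist p → ∀ ω, φ p ω = ψ ω * p ω / ∑ ω', ψ ω' * p ω') ∧
      (∀ E ∈ P.parts, ∀ ω ∈ E, ∀ ω' ∈ E, ψ ω = ψ ω') := by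
  obtain ⟨E₀, hE₀, hc1, hc2⟩ := hNontrivial
  obtain ⟨ω₁, hω₁, ω₂, hω₂, h12⟩ := Finset.one_lt_card.mp hc1
  have hE₀ne : E₀ ≠ Finset.univ := by
    intro h
    rw [h, Finset.card_univ] at hc2
    exact lt_irrefl _ hc2
  obtain ⟨ω₃, -, hω₃⟩ := Finset.exists_of_ssubset (Finset.ssubset_univ_iff.mpr hE₀ne)
  have h13 : ω₁ ≠ ω₃ := fun h => hω₃ (h ▸ hω₁)
  have h23 : ω₂ ≠ ω₃ := fun h => hω₃ (h ▸ hω₂)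
  have hA : ∀ u v : ℝ, 0 < u → 0 < v →
      rat φ ω₁ ω₃ (u + v) = rat φ ω₁ ω₃ u + rat φ ω₂ ω₃ v :=
    fun u v hu hv => marg_add hmap hpos hcoh hmarg hE₀ hω₁ hω₂ h12 hω₃ hu hv
  have hB : ∀ u v : ℝ, 0 < u → 0 < v →
      rat φ ω₂ ω₃ (u + v) = rat φ ω₂ ω₃ u + rat φ ω₁ ω₃ v :=
    fun u v hu hv => marg_add hmap hpos hcoh hmarg hE₀ hω₂ hω₁ h12.symm hω₃ hu hv
  have hfg : ∀ w : ℝ, 0 < w → rat φ ω₁ ω₃ w = rat φ ω₂ ω₃ w := by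
    intro w hw
    have hw2 : 0 < w / 2 := by positivity
    have h1 := hA (w / 2) (w / 2) hw2 hw2
    have h2 := hB (w / 2) (w / 2) hw2 hw2
    have hww : w / 2 + w / 2 = w := by ring
    rw [hww] at h1 h2
    linarith
  have hadd : ∀ u v : ℝ, 0 < u → 0 < v →
      rat φ ω₁ ω₃ (u + v) = rat φ ω₁ ω₃ u + rat φ ω₁ ω₃ v := by
    intro u v hu hv
    rw [hA u v hu hv, hfg v hv]
  have hlin := cauchy_pos_linear (rat φ ω₁ ω₃) hadd
    (fun u hu => rat_pos hmap hpos h13 hu)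
  set ψ : Ω → ℝ := fun ω => if ω = ω₃ then 1 else rat φ ω ω₃ 1 with hψdef
  have hψω₃ : ψ ω₃ = 1 := by simp [hψdef]
  have hψne : ∀ ω, ω ≠ ω₃ → ψ ω = rat φ ω ω₃ 1 := fun ω h => by simp [hψdef, h]
  have hψpos : ∀ ω, 0 < ψ ω := by
    intro ω
    by_cases h : ω = ω₃
    · rw [h, hψω₃]; exact one_pos
    · rw [hψne ω h]; exact rat_pos hmap hpos h one_pos
  have glin : ∀ ω, ω ≠ ω₃ → ∀ t : ℝ, 0 < t → rat φ ω ω₃ t = ψ ω * t := by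
    intro ω hω t ht
    by_cases h1 : ω = ω₁
    · subst h1
      rw [hψne ω hω]
      exact hlin t ht
    · have h1' : ω₁ ≠ ω := fun h => h1 h.symm
      have hch := rat_mul hmap hpos hcoh h1' h13 hω (t := 1) (s := t) one_pos ht
      have hch1 := rat_mul hmap hpos hcoh h1' h13 hω (t := 1) (s := 1) one_pos one_pos
      rw [one_mul] at hch hch1
      have hr : 0 < rat φ ω₁ ω 1 := rat_pos hmap hpos h1' one_pos
      have hlt := hlin t ht
      have hl1 : rat φ ω₁ ω₃ 1 = rat φ ω₁ ω 1 * ψ ω := by rw [hch1, hψne ω hω]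
      apply mul_left_cancel₀ hr.ne'
      rw [← hch, hlt, hl1]
      ring
  have gpair : ∀ ω ω' : Ω, ω ≠ ω' → ∀ t : ℝ, 0 < t →
      rat φ ω ω' t * ψ ω' = ψ ω * t := by
    intro ω ω' hne t ht
    by_cases h3' : ω' = ω₃
    · subst h3'
      rw [hψω₃, mul_one]
      exact glin ω hne t ht
    · by_cases h3 : ω = ω₃
      · subst h3
        have hinv := rat_inv_mul hmap hpos hcoh hne ht
        have hg := glin ω' h3' t⁻¹ (inv_pos.mpr ht)
        rw [hg] at hinv
        rw [hψω₃, one_mul]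
        have heq : rat φ ω ω' t * ψ ω' = rat φ ω ω' t * (ψ ω' * t⁻¹) * t := by
          field_simp
        rw [heq, hinv, one_mul]
      · have hch := rat_mul hmap hpos hcoh hne h3 h3' (t := t) (s := 1) ht one_pos
        rw [mul_one] at hch
        rw [glin ω h3 t ht] at hch
        rw [← hψne ω' h3'] at hch
        exact hch.symm
  refine ⟨ψ, hψpos, ?_, ?_⟩
  · intro p hp ω
    set D := ∑ ω', ψ ω' * p ω' with hDdef
    obtain ⟨ωp, hωp⟩ : ∃ ω', 0 < p ω' := by
      by_contra h
      push_neg at h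
      have hz : ∑ ω', p ω' = 0 :=
        Finset.sum_eq_zero fun ω' _ => le_antisymm (h ω') (hp.1 ω')
      rw [hp.2] at hz
      exact one_ne_zero hz
    have hD : 0 < D :=
      Finset.sum_pos' (fun i _ => mul_nonneg (hψpos i).le (hp.1 i))
        ⟨ωp, Finset.mem_univ _, mul_pos (hψpos ωp) hωp⟩
    have key : ∀ ω', φ p ω * (ψ ω' * p ω') = φ p ω' * (ψ ω * p ω) := by
      intro ω'
      by_cases hzω : p ω = 0
      · rw [(phi_eq_zero_iff hpos hp ω).mpr hzω, hzω]; ring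
      · by_cases hzω' : p ω' = 0
        · rw [(phi_eq_zero_iff hpos hp ω').mpr hzω', hzω']; ring
        · by_cases he : ω = ω'
          · subst he; ring
          · have h1 : 0 < p ω := (hp.1 ω).lt_of_ne (Ne.symm hzω)
            have h2 : 0 < p ω' := (hp.1 ω').lt_of_ne (Ne.symm hzω')
            have e := rat_spec hmap hpos hcoh he hp h1 h2
            have gp := gpair ω ω' he (p ω / p ω') (div_pos h1 h2)
            have gp' : rat φ ω ω' (p ω / p ω') * ψ ω' * p ω' = ψ ω * p ω := by
              calc rat φ ω ω' (p ω / p ω') * ψ ω' * p ω'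
                  = (ψ ω * (p ω / p ω')) * p ω' := by rw [gp]
                _ = ψ ω * p ω := by field_simp
            rw [e]
            linear_combination φ p ω' * gp'
    have hmul : φ p ω * D = ψ ω * p ω := by
      calc φ p ω * D = ∑ ω', φ p ω * (ψ ω' * p ω') := by rw [hDdef, Finset.mul_sum]
        _ = ∑ ω', φ p ω' * (ψ ω * p ω) := Finset.sum_congr rfl fun ω' _ => key ω'
        _ = (∑ ω', φ p ω') * (ψ ω * p ω) := by rw [Finset.sum_mul]
        _ = ψ ω * p ω := by rw [(hmap p hp).2, one_mul]
    rw [eq_div_iff hD.ne']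
    exact hmul
  · intro E hE ω hω ω' hω'
    by_cases he : ω = ω'
    · rw [he]
    · have hEne : E ≠ Finset.univ := by
        intro h
        have h1 : ω₁ ∈ E := h ▸ Finset.mem_univ ω₁
        have hEE : E₀ = E := P.eq_of_mem_parts hE₀ hE hω₁ h1
        rw [hEE, h, Finset.card_univ] at hc2
        exact lt_irrefl _ hc2
      obtain ⟨ω₀, -, hω₀⟩ := Finset.exists_of_ssubset (Finset.ssubset_univ_iff.mpr hEne)
      have h10 : ω ≠ ω₀ := fun h => hω₀ (h ▸ hω)
      have h20 : ω' ≠ ω₀ := fun h => hω₀ (h ▸ hω')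
      have hM := marg_add hmap hpos hcoh hmarg hE hω hω' he hω₀ (u := 1) (v := 1)
        one_pos one_pos
      have g1 := gpair ω ω₀ h10 (1 + 1) (by norm_num)
      have g2 := gpair ω ω₀ h10 1 one_pos
      have g3 := gpair ω' ω₀ h20 1 one_pos
      have h' : rat φ ω ω₀ (1 + 1) * ψ ω₀ = (rat φ ω ω₀ 1 + rat φ ω' ω₀ 1) * ψ ω₀ := by
        rw [hM]
      rw [add_mul, g1, g2, g3] at h'
      linear_combination h'

end Forward

section Reverse

variable {Ω : Type*} [Fintype Ω] [DecidableEq Ω] {φ : (Ω → ℝ) → Ω → ℝ} {ψ : Ω → ℝ}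

lemma dpos (hψ : ∀ ω, 0 < ψ ω) {p : Ω → ℝ} (hp : IsDist p) :
    0 < ∑ ω, ψ ω * p ω := by
  obtain ⟨ωp, hωp⟩ : ∃ ω', 0 < p ω' := by
    by_contra h
    push_neg at h
    have hz : ∑ ω', p ω' = 0 :=
      Finset.sum_eq_zero fun ω' _ => le_antisymm (h ω') (hp.1 ω')
    rw [hp.2] at hz
    exact one_ne_zero hz
  exact Finset.sum_pos' (fun i _ => mul_nonneg (hψ i).le (hp.1 i))
    ⟨ωp, Finset.mem_univ _, mul_pos (hψ ωp) hωp⟩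

lemma rev_pos (hψ : ∀ ω, 0 < ψ ω)
    (hF : ∀ p, IsDist p → ∀ ω, φ p ω = ψ ω * p ω / ∑ ω', ψ ω' * p ω') :
    PositiveBelief φ := by
  intro p hp E
  have hD := dpos hψ hp
  have hsum : ∑ x ∈ E, φ p x = (∑ x ∈ E, ψ x * p x) / ∑ ω', ψ ω' * p ω' := by
    rw [Finset.sum_div]
    exact Finset.sum_congr rfl fun x _ => hF p hp x
  rw [hsum, div_eq_zero_iff]
  have h1 : (∑ x ∈ E, ψ x * p x = 0) ↔ ∀ x ∈ E, ψ x * p x = 0 :=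
    Finset.sum_eq_zero_iff_of_nonneg fun x _ => mul_nonneg (hψ x).le (hp.1 x)
  have h2 : (∑ x ∈ E, p x = 0) ↔ ∀ x ∈ E, p x = 0 :=
    Finset.sum_eq_zero_iff_of_nonneg fun x _ => hp.1 x
  constructor
  · rintro (h | h)
    · rw [h2]
      intro x hx
      exact (mul_eq_zero.mp (h1.mp h x hx)).resolve_left (hψ x).ne'
    · exact absurd h hD.ne'
  · intro h
    left
    rw [h1]
    intro x hx
    rw [h2.mp h x hx, mul_zero]

lemma rev_cont (hψ : ∀ ω, 0 < ψ ω)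
    (hF : ∀ p, IsDist p → ∀ ω, φ p ω = ψ ω * p ω / ∑ ω', ψ ω' * p ω') :
    ContinuousOn φ {p : Ω → ℝ | IsDist p} := by
  apply ContinuousOn.congr (f := fun p (ω : Ω) => ψ ω * p ω / ∑ ω', ψ ω' * p ω')
  · rw [continuousOn_pi]
    intro ω
    apply ContinuousOn.div
    · exact (continuous_const.mul (continuous_apply ω)).continuousOn
    · exact (continuous_finset_sum Finset.univ fun j _ =>
        continuous_const.mul (continuous_apply j)).continuousOn
    · intro p hp
      exact (dpos hψ hp).ne'
  · intro p hp
    funext ω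
    exact hF p hp ω

lemma rev_coh (hψ : ∀ ω, 0 < ψ ω)
    (hF : ∀ p, IsDist p → ∀ ω, φ p ω = ψ ω * p ω / ∑ ω', ψ ω' * p ω') :
    CoherentBelief φ := by
  intro p hp E hE
  have hD := dpos hψ hp
  have hSne : (∑ x ∈ E, p x) ≠ 0 := hE.ne'
  have hcd : IsDist (condOn p E) := by
    constructor
    · intro x
      unfold condOn
      split_ifs
      · exact div_nonneg (hp.1 x) hE.le
      · exact le_rfl
    · simp only [condOn]
      rw [Finset.sum_ite_mem, Finset.univ_inter, ← Finset.sum_div, div_self hSne]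
  have hT : 0 < ∑ x ∈ E, ψ x * p x := by
    obtain ⟨x0, hx0E, hx0⟩ : ∃ x ∈ E, 0 < p x := by
      by_contra h
      push_neg at h
      have hz : ∑ x ∈ E, p x = 0 :=
        Finset.sum_eq_zero fun x hx => le_antisymm (h x hx) (hp.1 x)
      exact hE.ne' hz
    exact Finset.sum_pos' (fun i _ => mul_nonneg (hψ i).le (hp.1 i))
      ⟨x0, hx0E, mul_pos (hψ x0) hx0⟩
  have hDc : ∑ ω', ψ ω' * condOn p E ω' = (∑ x ∈ E, ψ x * p x) / ∑ x ∈ E, p x := by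
    simp only [condOn, mul_ite, mul_zero]
    rw [Finset.sum_ite_mem, Finset.univ_inter, Finset.sum_div]
    exact Finset.sum_congr rfl fun x _ => (mul_div_assoc _ _ _).symm
  have hsumEφ : ∑ x ∈ E, φ p x = (∑ x ∈ E, ψ x * p x) / ∑ ω', ψ ω' * p ω' := by
    rw [Finset.sum_div]
    exact Finset.sum_congr rfl fun x _ => hF p hp x
  funext x
  rw [hF _ hcd x, hDc]
  by_cases hx : x ∈ E
  · simp only [condOn, hx, if_true]
    rw [hF p hp x, hsumEφ]
    field_simp [hSne, hT.ne', hD.ne']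
  · simp [condOn, hx]

lemma sum_parts_eq {Ω : Type*} [Fintype Ω] [DecidableEq Ω]
    (P : Finpartition (Finset.univ : Finset Ω)) (f : Ω → ℝ) :
    ∑ F ∈ P.parts, ∑ x ∈ F, f x = ∑ x, f x := by
  conv_rhs => rw [← P.biUnion_parts]
  rw [Finset.sum_biUnion (P.supIndep.pairwiseDisjoint)]
  rfl

lemma rev_marg (hψ : ∀ ω, 0 < ψ ω)
    (hF : ∀ p, IsDist p → ∀ ω, φ p ω = ψ ω * p ω / ∑ ω', ψ ω' * p ω')
    (P : Finpartition (Finset.univ : Finset Ω))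
    (hconst : ∀ E ∈ P.parts, ∀ ω ∈ E, ∀ ω' ∈ E, ψ ω = ψ ω') : PiMarginal P φ := by
  intro p p' hp hp' hagree E hE
  have hcell : ∀ F ∈ P.parts, ∑ x ∈ F, ψ x * p x = ∑ x ∈ F, ψ x * p' x := by
    intro F hF'
    have hFne : F.Nonempty := by
      rw [Finset.nonempty_iff_ne_empty]
      have := ne_of_mem_of_not_mem hF' P.bot_notMem
      simpa using this
    obtain ⟨ω₀, hω₀⟩ := hFne
    calc ∑ x ∈ F, ψ x * p x = ψ ω₀ * ∑ x ∈ F, p x := by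
          rw [Finset.mul_sum]
          exact Finset.sum_congr rfl fun x hx => by rw [hconst F hF' x hx ω₀ hω₀]
      _ = ψ ω₀ * ∑ x ∈ F, p' x := by rw [hagree F hF']
      _ = ∑ x ∈ F, ψ x * p' x := by
          rw [Finset.mul_sum]
          exact (Finset.sum_congr rfl fun x hx => by rw [hconst F hF' x hx ω₀ hω₀]).symm
  have hD : ∑ ω', ψ ω' * p ω' = ∑ ω', ψ ω' * p' ω' := by
    rw [← sum_parts_eq P, ← sum_parts_eq P]
    exact Finset.sum_congr rfl hcell
  have e1 : ∑ x ∈ E, φ p x = (∑ x ∈ E, ψ x * p x) / ∑ ω', ψ ω' * p ω' := by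
    rw [Finset.sum_div]
    exact Finset.sum_congr rfl fun x _ => hF p hp x
  have e2 : ∑ x ∈ E, φ p' x = (∑ x ∈ E, ψ x * p' x) / ∑ ω', ψ ω' * p' ω' := by
    rw [Finset.sum_div]
    exact Finset.sum_congr rfl fun x _ => hF p' hp' x
  rw [e1, e2, hcell E hE, hD]

end Reverse

/-- **Corollary**: for a nontrivial partition `Π` of `Ω` (`|Ω| ≥ 3`), `φ` satisfies
positivity, continuity, coherency and `Π`-marginality iff `φ` is power-weighted with
`α = 1` and `ψ` constant on each cell of `Π`. -/
theorem stmt4 {Ω : Type*} [Fintype Ω] [DecidableEq Ω] (hΩ : 3 ≤ Fintype.card Ω)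
    (P : Finpartition (Finset.univ : Finset Ω))
    (hNontrivial : ∃ E ∈ P.parts, 1 < E.card ∧ E.card < Fintype.card Ω)
    (φ : (Ω → ℝ) → Ω → ℝ) (hmap : ∀ p, IsDist p → IsDist (φ p)) :
    (PositiveBelief φ ∧ ContinuousOn φ {p | IsDist p} ∧ CoherentBelief φ ∧
        PiMarginal P φ) ↔
      ∃ (ψ : Ω → ℝ) (α : ℝ), IsPowerWeighted φ ψ α ∧ α = 1 ∧
        ∀ E ∈ P.parts, ∀ ω ∈ E, ∀ ω' ∈ E, ψ ω = ψ ω' := by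
  constructor
  · rintro ⟨hpos, -, hcoh, hmarg⟩
    obtain ⟨ψ, hψpos, hform, hconst⟩ := forward_formula hNontrivial hmap hpos hcoh hmarg
    refine ⟨ψ, 1, ⟨hψpos, one_pos, ?_⟩, rfl, hconst⟩
    intro p hp ω
    simp only [Real.rpow_one]
    exact hform p hp ω
  · rintro ⟨ψ, α, hPW, hα, hconst⟩
    subst hα
    obtain ⟨hψpos, -, hform⟩ := hPW
    have hF : ∀ p, IsDist p → ∀ ω, φ p ω = ψ ω * p ω / ∑ ω', ψ ω' * p ω' := by
      intro p hp ω
      have := hform p hp ω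
      simpa [Real.rpow_one] using this
    exact ⟨rev_pos hψpos hF, rev_cont hψpos hF, rev_coh hψpos hF,
      rev_marg hψpos hF P hconst⟩
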